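/- If P is a complex polynomial of degree n ≥ 1 having all its zeros in the closed disk D(0,R) of radius R ≤ 1 centered at 0, then ‖P'‖_D ≥ (n/(1+R)) ‖P‖_D, where D is the closed unit disk. -/

import Mathlib

open Polynomial Set

-- Lemma A: pointwise bound
lemma lemA {R : ℝ} (hR0 : 0 ≤ R) (hR1 : R ≤ 1) {a z : ℂ} (ha : ‖a‖ ≤ R)
    (hz : ‖z‖ = 1) (hne : z ≠ a) : 1/(1+R) ≤ (z / (z - a)).re := by
  have hw : z - a ≠ 0 := sub_ne_zero.2 hne
  set u : ℝ := ‖a‖ with hu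
  have hu0 : 0 ≤ u := norm_nonneg a
  have ht : -u ≤ (z * (starRingEnd ℂ) a).re := by
    have h1 : |(z * (starRingEnd ℂ) a).re| ≤ ‖z * (starRingEnd ℂ) a‖ := Complex.abs_re_le_norm _
    have h2 : ‖z * (starRingEnd ℂ) a‖ = u := by
      rw [norm_mul, hz, RCLike.norm_conj, one_mul]
    nlinarith [abs_nonneg (z * (starRingEnd ℂ) a).re, neg_abs_le (z * (starRingEnd ℂ) a).re]
  have hz2 : z.re^2 + z.im^2 = 1 := by
    have h1 : Complex.normSq z = 1 := by
      rw [← Complex.sq_norm, hz]; norm_num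
    rw [Complex.normSq_apply] at h1
    nlinarith [h1]
  have ha2 : a.re^2 + a.im^2 = u^2 := by
    have h1 : Complex.normSq a = u^2 := by
      rw [← Complex.sq_norm, hu]
    rw [Complex.normSq_apply] at h1
    nlinarith [h1]
  have hD : 0 < (z - a).re^2 + (z - a).im^2 := by
    have h1 : 0 < Complex.normSq (z - a) := Complex.normSq_pos.2 hw
    rw [Complex.normSq_apply] at h1
    nlinarith [h1]
  have hre : (z / (z - a)).re =
      (z.re * (z - a).re + z.im * (z - a).im) / ((z - a).re^2 + (z - a).im^2) := by
    rw [Complex.div_re, Complex.normSq_apply]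
    ring
  rw [hre]
  rw [div_le_div_iff₀ (by linarith) hD]
  have htre : (z * (starRingEnd ℂ) a).re = z.re * a.re + z.im * a.im := by
    simp [Complex.mul_re]
  rw [htre] at ht
  simp only [Complex.sub_re, Complex.sub_im]
  nlinarith [mul_nonneg (sub_nonneg.2 ha) (by linarith : (0:ℝ) ≤ 1 + u),
    mul_nonneg (sub_nonneg.2 hR1) (by linarith : (0:ℝ) ≤ u + (z.re * a.re + z.im * a.im))]

-- Lemma B
lemma lemB {R : ℝ} (hR0 : 0 ≤ R) (hR1 : R ≤ 1) (s : Multiset ℂ)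
    (hs : ∀ a ∈ s, ‖a‖ ≤ R) {z : ℂ} (hz : ‖z‖ = 1) (hzs : ∀ a ∈ s, z ≠ a) :
    (s.card : ℝ)/(1+R) ≤
      (z * (derivative (s.map (fun a => X - C a)).prod).eval z /
        ((s.map (fun a => X - C a)).prod).eval z).re := by
  induction s using Multiset.induction with
  | empty => simp
  | cons a s ih =>
    have hQne : ∀ (t : Multiset ℂ), (∀ b ∈ t, z ≠ b) →
        ((t.map (fun a => X - C a)).prod).eval z ≠ 0 := by
      intro t ht
      rw [eval_multiset_prod]
      refine Multiset.prod_ne_zero ?_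
      intro h0
      simp only [Multiset.mem_map] at h0
      obtain ⟨q, hq, hq0⟩ := h0
      obtain ⟨b, hb, rfl⟩ := hq
      simp at hq0
      exact sub_ne_zero.2 (ht b hb) hq0
    have hQs : ((s.map (fun a => X - C a)).prod).eval z ≠ 0 :=
      hQne s (fun b hb => hzs b (Multiset.mem_cons_of_mem hb))
    have hza : z - a ≠ 0 := sub_ne_zero.2 (hzs a (Multiset.mem_cons_self a s))
    have key : z * (derivative ((a ::ₘ s).map (fun a => X - C a)).prod).eval z /
        (((a ::ₘ s).map (fun a => X - C a)).prod).eval z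
        = z / (z - a) + z * (derivative (s.map (fun a => X - C a)).prod).eval z /
          ((s.map (fun a => X - C a)).prod).eval z := by
      rw [Multiset.map_cons, Multiset.prod_cons, derivative_mul]
      simp only [derivative_sub, derivative_X, derivative_C, sub_zero, one_mul, eval_add,
        eval_mul, eval_sub, eval_X, eval_C]
      field_simp
    rw [key, Complex.add_re]
    have h1 := lemA hR0 hR1 (hs a (Multiset.mem_cons_self a s)) hz
      (hzs a (Multiset.mem_cons_self a s))
    have h2 := ih (fun b hb => hs b (Multiset.mem_cons_of_mem hb))
      (fun b hb => hzs b (Multiset.mem_cons_of_mem hb))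
    have : ((a ::ₘ s).card : ℝ)/(1+R) = 1/(1+R) + (s.card : ℝ)/(1+R) := by
      rw [Multiset.card_cons]; push_cast; ring
    rw [this]
    exact add_le_add h1 h2

theorem turan_disk_R (P : Polynomial ℂ) (n : ℕ) (R : ℝ) (hn : 1 ≤ n) (hdeg : P.natDegree = n)
    (hR0 : 0 ≤ R) (hR1 : R ≤ 1) (hz : ∀ z : ℂ, P.IsRoot z → ‖z‖ ≤ R) :
    ((n : ℝ) / (1 + R)) * (⨆ z : Metric.closedBall (0:ℂ) 1, ‖P.eval (z : ℂ)‖) ≤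
      ⨆ z : Metric.closedBall (0:ℂ) 1, ‖(Polynomial.derivative P).eval (z : ℂ)‖ := by
  have hP0 : P ≠ 0 := by
    intro h; rw [h] at hdeg; simp at hdeg; omega
  -- nonneg of RHS
  have hbddP : BddAbove (Set.range fun z : Metric.closedBall (0:ℂ) 1 => ‖P.eval (z : ℂ)‖) := by
    have : IsCompact ((fun z => ‖P.eval z‖) '' Metric.closedBall (0:ℂ) 1) :=
      (isCompact_closedBall 0 1).image (by continuity)
    have hr : (Set.range fun z : Metric.closedBall (0:ℂ) 1 => ‖P.eval (z : ℂ)‖)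
        = (fun z => ‖P.eval z‖) '' Metric.closedBall (0:ℂ) 1 := by
      ext x; simp
    rw [hr]; exact this.bddAbove
  have hbddP' : BddAbove (Set.range fun z : Metric.closedBall (0:ℂ) 1 =>
      ‖(derivative P).eval (z : ℂ)‖) := by
    have : IsCompact ((fun z => ‖(derivative P).eval z‖) '' Metric.closedBall (0:ℂ) 1) :=
      (isCompact_closedBall 0 1).image (by continuity)
    have hr : (Set.range fun z : Metric.closedBall (0:ℂ) 1 => ‖(derivative P).eval (z : ℂ)‖)
        = (fun z => ‖(derivative P).eval z‖) '' Metric.closedBall (0:ℂ) 1 := by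
      ext x; simp
    rw [hr]; exact this.bddAbove
  have hne : Nonempty (Metric.closedBall (0:ℂ) 1) := ⟨⟨0, by simp⟩⟩
  have hRHS0 : 0 ≤ ⨆ z : Metric.closedBall (0:ℂ) 1, ‖(derivative P).eval (z : ℂ)‖ :=
    Real.iSup_nonneg (fun z => norm_nonneg _)
  -- max modulus: get z0 on sphere
  obtain ⟨z0, hz0f, hz0max⟩ := Complex.exists_mem_frontier_isMaxOn_norm (U := Metric.ball (0:ℂ) 1)
    Metric.isBounded_ball ⟨0, by simp⟩
    ((Polynomial.differentiable P).diffContOnCl)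
  rw [frontier_ball 0 one_ne_zero] at hz0f
  rw [closure_ball 0 one_ne_zero] at hz0max
  have hz0n : ‖z0‖ = 1 := by simpa using hz0f
  have hz0mem : z0 ∈ Metric.closedBall (0:ℂ) 1 :=
    Metric.sphere_subset_closedBall hz0f
  set M := ‖P.eval z0‖ with hM
  have hsuple : (⨆ z : Metric.closedBall (0:ℂ) 1, ‖P.eval (z : ℂ)‖) ≤ M := by
    apply ciSup_le
    intro z
    exact hz0max z.2
  by_cases hM0 : M = 0
  · have h1 : (⨆ z : Metric.closedBall (0:ℂ) 1, ‖P.eval (z : ℂ)‖) = 0 := by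
      apply le_antisymm (hM0 ▸ hsuple) (Real.iSup_nonneg (fun z => norm_nonneg _))
    rw [h1, mul_zero]; exact hRHS0
  · have hMpos : 0 < M := lt_of_le_of_ne (norm_nonneg _) (Ne.symm hM0)
    have hPz0 : P.eval z0 ≠ 0 := by
      intro h; apply hM0; rw [hM, h, norm_zero]
    -- factorization
    have hsplit : Splits P := IsAlgClosed.splits P
    have hfac := hsplit.eq_prod_roots
    have hcard : P.roots.card = n := by
      rw [← hdeg]; exact (splits_iff_card_roots.1 hsplit)
    set c := P.leadingCoeff with hc
    have hc0 : c ≠ 0 := leadingCoeff_ne_zero.2 hP0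
    set Q := (P.roots.map (fun a => X - C a)).prod with hQ
    have hroots : ∀ a ∈ P.roots, ‖a‖ ≤ R := by
      intro a ha
      exact hz a (isRoot_of_mem_roots ha)
    have hzne : ∀ a ∈ P.roots, z0 ≠ a := by
      intro a ha h
      apply hPz0
      rw [h]
      exact isRoot_of_mem_roots ha
    have hkey := lemB hR0 hR1 P.roots hroots hz0n hzne
    rw [hcard] at hkey
    -- relate P to Q
    have hPeval : P.eval z0 = c * Q.eval z0 := by
      conv_lhs => rw [hfac]
      simp [hQ]
    have hPderiv : (derivative P).eval z0 = c * (derivative Q).eval z0 := by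
      conv_lhs => rw [hfac]
      rw [derivative_C_mul]
      simp
    have hQz0 : Q.eval z0 ≠ 0 := by
      intro h; apply hPz0; rw [hPeval, h, mul_zero]
    have heq : z0 * (derivative Q).eval z0 / Q.eval z0
        = z0 * (derivative P).eval z0 / P.eval z0 := by
      rw [hPeval, hPderiv]
      field_simp
    rw [heq] at hkey
    -- now: n/(1+R) ≤ re ≤ norm = ‖P'(z0)‖ / M
    have hnorm : (z0 * (derivative P).eval z0 / P.eval z0).re ≤
        ‖(derivative P).eval z0‖ / M := by
      calc (z0 * (derivative P).eval z0 / P.eval z0).re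
          ≤ ‖z0 * (derivative P).eval z0 / P.eval z0‖ := Complex.re_le_norm _
        _ = ‖(derivative P).eval z0‖ / M := by
            rw [norm_div, norm_mul, hz0n, one_mul, hM]
    have hfinal : (n : ℝ)/(1+R) * M ≤ ‖(derivative P).eval z0‖ := by
      have h1 := le_trans hkey hnorm
      rw [div_le_div_iff₀ (by linarith) hMpos] at h1
      rw [div_mul_eq_mul_div, div_le_iff₀ (by linarith)]
      linarith
    calc ((n : ℝ) / (1 + R)) * (⨆ z : Metric.closedBall (0:ℂ) 1, ‖P.eval (z : ℂ)‖)
        ≤ ((n : ℝ) / (1 + R)) * M := by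
          apply mul_le_mul_of_nonneg_left hsuple
          positivity
      _ ≤ ‖(derivative P).eval z0‖ := hfinal
      _ ≤ ⨆ z : Metric.closedBall (0:ℂ) 1, ‖(derivative P).eval (z : ℂ)‖ := by
          exact le_ciSup hbddP' ⟨z0, hz0mem⟩
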